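/- Let a_1,...,a_N be nonnegative integers with a_1 > 0, and let H be the sequence defined by H_n = 1 + Σ_{k=1}^{n-1} a_k H_{n-k} for 1 ≤ n ≤ N+1 and H_{n+N} = a_1 H_{n+N-1} + ... + a_{N-1} H_{n+1} + (1+a_N) H_n for all n ≥ 1. Let ψ be the unique positive real zero of g(x) = x^N - Σ_{k=1}^{N-1} a_k x^{N-k} - (1+a_N). Then there exist real constants δ > 0 and 0 < r < 1 such that H_n = δ·ψ^n + O(ψ^{rn}). -/

import Mathlib

open Finset

lemma aux_conv (N : ℕ) (hN : 1 ≤ N) (v y : ℕ → ℝ)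
    (hv0 : ∀ k, 0 ≤ v k)
    (hv1 : ∑ k ∈ Finset.Icc 1 N, v k = 1)
    (hθ0 : 0 < v 1) (hθ1 : v 1 < 1)
    (hy : ∀ n, N + 1 ≤ n → y n = ∑ k ∈ Finset.Icc 1 N, v k * y (n - k)) :
    ∃ δ C s : ℝ, 0 < s ∧ s < 1 ∧ 0 ≤ C ∧
      (∃ m, 1 ≤ m ∧ m ≤ N ∧ y m ≤ δ) ∧
      ∀ n, 1 ≤ n → |y n - δ| ≤ C * s ^ n := by
  have hne : ∀ i : ℕ, (Finset.Icc (1+i*N) (N+i*N)).Nonempty :=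
    fun i => ⟨1+i*N, Finset.mem_Icc.mpr ⟨le_refl _, Nat.add_le_add_right hN _⟩⟩
  set M : ℕ → ℝ := fun i => (Finset.Icc (1+i*N) (N+i*N)).sup' (hne i) y with hM
  set L : ℕ → ℝ := fun i => (Finset.Icc (1+i*N) (N+i*N)).inf' (hne i) y with hL
  -- Lemma A
  have lemA_up : ∀ i n, 1 + i * N ≤ n → y n ≤ M i := by
    intro i n
    induction n using Nat.strong_induction_on with
    | _ n ih =>
      intro hn
      by_cases hcase : n ≤ N + i*N
      · exact Finset.le_sup' y (Finset.mem_Icc.mpr ⟨hn, hcase⟩)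
      · push_neg at hcase
        have hn1 : N + 1 ≤ n := by omega
        rw [hy n hn1]
        calc ∑ k ∈ Finset.Icc 1 N, v k * y (n - k)
            ≤ ∑ k ∈ Finset.Icc 1 N, v k * M i := by
              refine Finset.sum_le_sum fun k hk => ?_
              have hk1 : 1 ≤ k := (Finset.mem_Icc.mp hk).1
              have hk2 : k ≤ N := (Finset.mem_Icc.mp hk).2
              refine mul_le_mul_of_nonneg_left ?_ (hv0 k)
              exact ih (n - k) (by omega) (by omega)
          _ = M i := by rw [← Finset.sum_mul, hv1, one_mul]
  have lemA_lo : ∀ i n, 1 + i * N ≤ n → L i ≤ y n := by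
    intro i n
    induction n using Nat.strong_induction_on with
    | _ n ih =>
      intro hn
      by_cases hcase : n ≤ N + i*N
      · exact Finset.inf'_le y (Finset.mem_Icc.mpr ⟨hn, hcase⟩)
      · push_neg at hcase
        have hn1 : N + 1 ≤ n := by omega
        rw [hy n hn1]
        calc L i = ∑ k ∈ Finset.Icc 1 N, v k * L i := by rw [← Finset.sum_mul, hv1, one_mul]
          _ ≤ ∑ k ∈ Finset.Icc 1 N, v k * y (n - k) := by
              refine Finset.sum_le_sum fun k hk => ?_
              have hk1 : 1 ≤ k := (Finset.mem_Icc.mp hk).1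
              have hk2 : k ≤ N := (Finset.mem_Icc.mp hk).2
              refine mul_le_mul_of_nonneg_left ?_ (hv0 k)
              exact ih (n - k) (by omega) (by omega)
  have hMa : ∀ i j, i ≤ j → M j ≤ M i := by
    intro i j hij
    refine Finset.sup'_le _ y fun n hn => lemA_up i n ?_
    have := (Finset.mem_Icc.mp hn).1
    have : i * N ≤ j * N := Nat.mul_le_mul_right N hij
    omega
  have hLm : ∀ i j, i ≤ j → L i ≤ L j := by
    intro i j hij
    refine Finset.le_inf' _ y fun n hn => lemA_lo i n ?_
    have := (Finset.mem_Icc.mp hn).1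
    have : i * N ≤ j * N := Nat.mul_le_mul_right N hij
    omega
  have hLM : ∀ i, L i ≤ M i := by
    intro i
    have h1 : 1 + i*N ∈ Finset.Icc (1+i*N) (N+i*N) :=
      Finset.mem_Icc.mpr ⟨le_refl _, Nat.add_le_add_right hN _⟩
    exact le_trans (Finset.inf'_le y h1) (Finset.le_sup' y h1)
  -- contraction
  set θ : ℝ := v 1 with hθ
  have contraction : ∀ i, M (i+2) ≤ M i - θ^(2*N-1) * (M i - L (i+1)) := by
    intro i
    obtain ⟨j, hjmem, hjeq⟩ := Finset.exists_mem_eq_inf' (hne (i+1)) y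
    rw [Finset.mem_Icc] at hjmem
    have e1 : (i+1)*N = i*N + N := by ring
    have e2 : (i+2)*N = i*N + N + N := by ring
    have hD : 0 ≤ M i - L (i+1) := by
      have := lemA_up i j (by omega)
      rw [hL] at *
      simp only [] at *
      linarith [hjeq ▸ this]
    set D : ℝ := M i - L (i+1) with hDdef
    have chain : ∀ s : ℕ, y (j + s) ≤ M i - θ^s * D := by
      intro s
      induction s with
      | zero =>
        have : y j = L (i+1) := hjeq.symm
        simp only [Nat.add_zero, this, pow_zero, one_mul, hDdef]
        linarith
      | succ s ihs =>
        have hrec : y (j+s+1) = ∑ k ∈ Finset.Icc 1 N, v k * y (j+s+1 - k) := by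
          refine hy _ ?_
          omega
        have hsplit : Finset.Icc 1 N = insert 1 (Finset.Icc 2 N) := by
          ext x; simp only [Finset.mem_Icc, Finset.mem_insert]; omega
        have h1notin : (1:ℕ) ∉ Finset.Icc 2 N := by simp
        rw [hsplit, Finset.sum_insert h1notin] at hrec
        have hsum2 : ∑ k ∈ Finset.Icc 2 N, v k = 1 - θ := by
          have := hv1
          rw [hsplit, Finset.sum_insert h1notin] at this
          linarith
        have hstray : ∀ k ∈ Finset.Icc 2 N, v k * y (j+s+1-k) ≤ v k * M i := by
          intro k hk
          rw [Finset.mem_Icc] at hk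
          refine mul_le_mul_of_nonneg_left ?_ (hv0 k)
          exact lemA_up i _ (by omega)
        have hb1 : v 1 * y (j+s+1-1) ≤ θ * (M i - θ^s * D) := by
          have : j+s+1-1 = j+s := by omega
          rw [this, hθ]
          exact mul_le_mul_of_nonneg_left ihs (le_of_lt hθ0)
        calc y (j+s+1) = v 1 * y (j+s+1-1) + ∑ k ∈ Finset.Icc 2 N, v k * y (j+s+1-k) := hrec
          _ ≤ θ * (M i - θ^s * D) + ∑ k ∈ Finset.Icc 2 N, v k * M i :=
              add_le_add hb1 (Finset.sum_le_sum hstray)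
          _ = θ * (M i - θ^s * D) + (1-θ) * M i := by rw [← Finset.sum_mul, hsum2]
          _ = M i - θ^(s+1) * D := by rw [pow_succ]; ring
    refine Finset.sup'_le _ y fun n hn => ?_
    rw [Finset.mem_Icc] at hn
    have hjn : j ≤ n := by omega
    have hs : n - j ≤ 2*N - 1 := by omega
    have := chain (n - j)
    rw [Nat.add_sub_cancel' hjn] at this
    refine this.trans ?_
    have hp : θ^(2*N-1) ≤ θ^(n-j) := pow_le_pow_of_le_one (le_of_lt hθ0) (le_of_lt hθ1) hs
    nlinarith [hD]
  set q : ℝ := 1 - θ^(2*N-1) with hq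
  have hq0 : 0 < q := by
    have : θ^(2*N-1) < 1 := pow_lt_one₀ (le_of_lt hθ0) hθ1 (by omega)
    simp only [hq]; linarith
  have hq1 : q < 1 := by
    have : 0 < θ^(2*N-1) := pow_pos hθ0 _
    simp only [hq]; linarith
  have osc_step : ∀ i, M (i+2) - L (i+2) ≤ q * (M i - L i) := by
    intro i
    have h1 := contraction i
    have h2 := hLm (i+1) (i+2) (by omega)
    have h3 := hLm i (i+1) (Nat.le_succ i)
    have h4 : (1 - θ^(2*N-1)) * (M i - L (i+1)) ≤ (1 - θ^(2*N-1)) * (M i - L i) := by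
      refine mul_le_mul_of_nonneg_left (by linarith) ?_
      simp only [hq] at hq0; linarith
    simp only [hq]
    linarith
  set B : ℝ := max (M 0 - L 0) (M 1 - L 1) with hB
  have hB0 : 0 ≤ B := le_trans (sub_nonneg.mpr (hLM 0)) (le_max_left _ _)
  have osc_decay : ∀ i, M i - L i ≤ B * q ^ (i/2) := by
    intro i
    induction i using Nat.strong_induction_on with
    | _ i ih =>
      match i, ih with
      | 0, _ =>
        show M 0 - L 0 ≤ B * q ^ (0/2)
        norm_num
        have hmx := le_max_left (M 0 - L 0) (M 1 - L 1)
        rw [← hB] at hmx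
        linarith
      | 1, _ =>
        show M 1 - L 1 ≤ B * q ^ (1/2)
        norm_num
        have hmx := le_max_right (M 0 - L 0) (M 1 - L 1)
        rw [← hB] at hmx
        linarith
      | (i+2), ih =>
        have h1 := osc_step i
        have h2 := ih i (by omega)
        have h3 : q * (M i - L i) ≤ q * (B * q ^ (i/2)) :=
          mul_le_mul_of_nonneg_left h2 (le_of_lt hq0)
        have e : (i+2)/2 = i/2 + 1 := by omega
        rw [e, pow_succ]
        calc M (i+2) - L (i+2) ≤ q * (B * q^(i/2)) := le_trans h1 h3
          _ = B * (q^(i/2) * q) := by ring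
  -- the limit
  have hbdd : BddAbove (Set.range L) := by
    refine ⟨M 0, ?_⟩
    rintro _ ⟨i, rfl⟩
    exact le_trans (hLM i) (hMa 0 i (Nat.zero_le i))
  set δ : ℝ := ⨆ i, L i with hδ
  have hLδ : ∀ i, L i ≤ δ := fun i => le_ciSup hbdd i
  have hδM : ∀ i, δ ≤ M i := by
    intro i
    refine ciSup_le fun j => ?_
    rcases le_total j i with h | h
    · exact le_trans (hLm j i h) (hLM i)
    · exact le_trans (hLM j) (hMa i j h)
  -- parameters
  set s : ℝ := q ^ ((2*(N:ℝ))⁻¹) with hs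
  have h2N : (0:ℝ) < 2*(N:ℝ) := by positivity
  have hs0 : 0 < s := Real.rpow_pos_of_pos hq0 _
  have hs1 : s < 1 := Real.rpow_lt_one (le_of_lt hq0) hq1 (by positivity)
  refine ⟨δ, B / q, s, hs0, hs1, by positivity, ?_, ?_⟩
  · obtain ⟨m, hmmem, hmeq⟩ := Finset.exists_mem_eq_inf' (hne 0) y
    rw [Finset.mem_Icc] at hmmem
    refine ⟨m, by omega, by omega, ?_⟩
    have : L 0 = y m := by rw [hL]; exact hmeq
    rw [← this]; exact hLδ 0
  · intro n hn
    have hN0 : 0 < N := by omega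
    have hw : 1 + ((n-1)/N)*N ≤ n ∧ n ≤ N + ((n-1)/N)*N := by
      have h1 := Nat.div_add_mod (n-1) N
      have h2 := Nat.mod_lt (n-1) hN0
      have e1 : N * ((n-1)/N) = ((n-1)/N) * N := by ring
      omega
    set i : ℕ := (n-1)/N with hi
    obtain ⟨hw1, hw2⟩ := hw
    have hnle : n ≤ (i/2+1)*(2*N) := by
      have h3 := Nat.div_add_mod i 2
      have e2 : (i/2+1)*(2*N) = (i/2)*N + (i/2)*N + N + N := by ring
      have e3 : i * N = (i/2)*N + (i/2)*N + (i % 2) * N := by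
        nth_rewrite 1 [← h3]; ring
      have e4 : i % 2 * N ≤ N := by
        have h5 : i % 2 ≤ 1 := by omega
        exact le_trans (Nat.mul_le_mul_right N h5) (by omega)
      omega
    set t : ℕ := i / 2 with ht
    have hmem : n ∈ Finset.Icc (1+i*N) (N+i*N) := Finset.mem_Icc.mpr ⟨hw1, hw2⟩
    have hub : y n ≤ M i := Finset.le_sup' y hmem
    have hlb : L i ≤ y n := Finset.inf'_le y hmem
    have habs : |y n - δ| ≤ M i - L i := by
      rw [abs_sub_le_iff]
      constructor
      · linarith [hLδ i]
      · linarith [hδM i]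
    have hosc := osc_decay i
    have hcast : (n:ℝ) ≤ ((t:ℝ)+1)*(2*(N:ℝ)) := by
      have := (Nat.cast_le (α := ℝ)).mpr hnle
      push_cast at this
      linarith
    have hexp : (n:ℝ) * (2*(N:ℝ))⁻¹ - 1 ≤ (t:ℝ) := by
      rw [sub_le_iff_le_add]
      rw [← div_le_iff₀ h2N] at hcast
      rw [div_eq_mul_inv] at hcast
      linarith
    have hsn : s^n = q ^ ((n:ℝ) * (2*(N:ℝ))⁻¹) := by
      rw [hs, ← Real.rpow_natCast (q ^ ((2*(N:ℝ))⁻¹)) n, ← Real.rpow_mul (le_of_lt hq0),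
        mul_comm]
    have hqt : (q:ℝ) ^ (t:ℕ) ≤ s^n * q⁻¹ := by
      have h6 : q ^ ((t:ℝ)) ≤ q ^ ((n:ℝ) * (2*(N:ℝ))⁻¹ - 1) :=
        Real.rpow_le_rpow_of_exponent_ge hq0 (le_of_lt hq1) hexp
      rw [Real.rpow_natCast] at h6
      refine h6.trans_eq ?_
      rw [sub_eq_add_neg, Real.rpow_add hq0, Real.rpow_neg_one, hsn]
    calc |y n - δ| ≤ M i - L i := habs
      _ ≤ B * q ^ t := hosc
      _ ≤ B * (s^n * q⁻¹) := mul_le_mul_of_nonneg_left hqt hB0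
      _ = B / q * s^n := by field_simp

/-- The fundamental sequence of a periodic Zeckendorf collection satisfies
`H_n = δ ψ^n + O(ψ^{rn})` for some `δ > 0` and `0 < r < 1`, where `ψ` is the
dominant positive real zero of the characteristic polynomial. -/
theorem fundamental_sequence_asymptotics
    (N : ℕ) (hN : 2 ≤ N)
    (a : ℕ → ℕ) (ha1 : 0 < a 1)
    (H : ℕ → ℕ)
    (hHinit : ∀ n, 1 ≤ n → n ≤ N + 1 →
      H n = 1 + ∑ k ∈ Finset.Icc 1 (n - 1), a k * H (n - k))
    (hHrec : ∀ n, 1 ≤ n →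
      H (n + N) = (∑ k ∈ Finset.Icc 1 (N - 1), a k * H (n + N - k)) + (1 + a N) * H n)
    (ψ : ℝ) (hψpos : 0 < ψ)
    (hψ : ψ ^ N = (∑ k ∈ Finset.Icc 1 (N - 1), (a k : ℝ) * ψ ^ (N - k)) + (1 + a N)) :
    ∃ δ : ℝ, 0 < δ ∧ ∃ r : ℝ, 0 < r ∧ r < 1 ∧ ∃ C : ℝ,
      ∀ n : ℕ, 1 ≤ n → |(H n : ℝ) - δ * ψ ^ n| ≤ C * ψ ^ (r * n) := by
  have hψne : ψ ≠ 0 := ne_of_gt hψpos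
  -- ψ is bigger than 1 and bigger than a 1
  have hpowpos : (0:ℝ) < ψ^(N-1) := pow_pos hψpos _
  have hsum_lb : (a 1:ℝ) * ψ^(N-1) ≤ ∑ k ∈ Finset.Icc 1 (N-1), (a k:ℝ) * ψ^(N-k) := by
    have h1mem : 1 ∈ Finset.Icc 1 (N-1) := Finset.mem_Icc.mpr ⟨le_refl 1, by omega⟩
    exact Finset.single_le_sum (f := fun k => (a k:ℝ) * ψ^(N-k)) (fun k _ => by positivity) h1mem
  have hψN : ψ^N = ψ^(N-1) * ψ := by rw [← pow_succ]; congr 1; omega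
  have ha1R : (1:ℝ) ≤ (a 1:ℝ) := by exact_mod_cast ha1
  have haN : (0:ℝ) ≤ (a N:ℝ) := by positivity
  have hmain : ψ^(N-1) * ψ ≥ (a 1:ℝ) * ψ^(N-1) + 1 := by
    rw [← hψN, hψ]; linarith
  have hψ1 : 1 < ψ := by
    by_contra h
    push_neg at h
    have : ψ^(N-1) * ψ ≤ ψ^(N-1) * 1 := mul_le_mul_of_nonneg_left h (le_of_lt hpowpos)
    nlinarith
  have ha1ψ : (a 1:ℝ) < ψ := by
    by_contra h
    push_neg at h
    have : ψ^(N-1) * ψ ≤ ψ^(N-1) * (a 1:ℝ) := mul_le_mul_of_nonneg_left h (le_of_lt hpowpos)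
    nlinarith
  -- coefficients
  set c : ℕ → ℝ := fun k => if k = N then 1 + (a N:ℝ) else (a k:ℝ) with hc
  have hc0 : ∀ k, 0 ≤ c k := by
    intro k
    simp only [hc]
    split <;> positivity
  have hsplit : Finset.Icc 1 N = insert N (Finset.Icc 1 (N-1)) := by
    ext x; simp only [Finset.mem_Icc, Finset.mem_insert]; omega
  have hNnotin : N ∉ Finset.Icc 1 (N-1) := by
    simp only [Finset.mem_Icc]; omega
  have key : ∀ n, 1 ≤ n → ∑ k ∈ Finset.Icc 1 N, c k * (H (n+N-k):ℝ) = (H (n+N):ℝ) := by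
    intro n hn
    rw [hsplit, Finset.sum_insert hNnotin]
    have h1 : c N = 1 + (a N:ℝ) := if_pos rfl
    have h2 : n + N - N = n := by omega
    have h3 : ∀ k ∈ Finset.Icc 1 (N-1), c k * (H (n+N-k):ℝ) = (a k:ℝ) * (H (n+N-k):ℝ) := by
      intro k hk
      rw [Finset.mem_Icc] at hk
      have : c k = (a k:ℝ) := if_neg (by omega)
      rw [this]
    rw [h1, h2, Finset.sum_congr rfl h3, hHrec n hn]
    push_cast
    ring
  set v : ℕ → ℝ := fun k => c k / ψ^k with hv
  set y : ℕ → ℝ := fun n => (H n:ℝ) / ψ^n with hy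
  have hv0 : ∀ k, 0 ≤ v k := by
    intro k
    simp only [hv]
    exact div_nonneg (hc0 k) (le_of_lt (pow_pos hψpos k))
  have hcsum : ∑ k ∈ Finset.Icc 1 N, c k * ψ^(N-k) = ψ^N := by
    rw [hsplit, Finset.sum_insert hNnotin]
    have h1 : c N = 1 + (a N:ℝ) := if_pos rfl
    have h2 : N - N = 0 := by omega
    have h3 : ∀ k ∈ Finset.Icc 1 (N-1), c k * ψ^(N-k) = (a k:ℝ) * ψ^(N-k) := by
      intro k hk
      rw [Finset.mem_Icc] at hk
      have : c k = (a k:ℝ) := if_neg (by omega)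
      rw [this]
    rw [h1, h2, pow_zero, mul_one, Finset.sum_congr rfl h3]
    linarith [hψ]
  have hv1 : ∑ k ∈ Finset.Icc 1 N, v k = 1 := by
    have hterm : ∀ k ∈ Finset.Icc 1 N, v k = c k * ψ^(N-k) / ψ^N := by
      intro k hk
      rw [Finset.mem_Icc] at hk
      have hpowe : ψ^N = ψ^(N-k) * ψ^k := by rw [← pow_add]; congr 1; omega
      simp only [hv]
      rw [hpowe, mul_comm (c k) (ψ^(N-k)),
        mul_div_mul_left _ _ (pow_ne_zero (N-k) hψne)]
    rw [Finset.sum_congr rfl hterm, ← Finset.sum_div, hcsum, div_self (pow_ne_zero N hψne)]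
  have hc1 : c 1 = (a 1:ℝ) := if_neg (by omega)
  have hθ0 : 0 < v 1 := by
    simp only [hv, hc1]
    have : (0:ℝ) < (a 1:ℝ) := by exact_mod_cast ha1
    positivity
  have hθ1 : v 1 < 1 := by
    simp only [hv, hc1, pow_one]
    rw [div_lt_one hψpos]
    exact ha1ψ
  have hyrec : ∀ n, N + 1 ≤ n → y n = ∑ k ∈ Finset.Icc 1 N, v k * y (n - k) := by
    intro n hn
    have hm : n - N + N = n := by omega
    have hkey := key (n-N) (by omega)
    rw [hm] at hkey
    have hterm2 : ∀ k ∈ Finset.Icc 1 N, v k * y (n-k) = c k * (H (n-k):ℝ) / ψ^n := by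
      intro k hk
      rw [Finset.mem_Icc] at hk
      simp only [hv, hy]
      rw [div_mul_div_comm]
      congr 1
      rw [← pow_add]
      congr 1
      omega
    rw [Finset.sum_congr rfl hterm2, ← Finset.sum_div, hkey]
  obtain ⟨δ, C, s, hs0, hs1, hC0, ⟨m, hm1, hm2, hmδ⟩, hbound⟩ :=
    aux_conv N (by omega) v y hv0 hv1 hθ0 hθ1 hyrec
  have hδ0 : 0 < δ := by
    have hHm : 1 ≤ H m := by
      have := hHinit m hm1 (by omega)
      omega
    have hym : 0 < y m := by
      simp only [hy]
      have h1 : (1:ℝ) ≤ (H m:ℝ) := by exact_mod_cast hHm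
      positivity
    exact lt_of_lt_of_le hym hmδ
  have hlogψ : 0 < Real.log ψ := Real.log_pos hψ1
  have hlogs : Real.log s < 0 := Real.log_neg hs0 hs1
  set r : ℝ := max (1/2 : ℝ) (1 + Real.log s / Real.log ψ) with hr
  have hr0 : 0 < r := lt_of_lt_of_le (by norm_num) (le_max_left _ _)
  have hr1 : r < 1 := by
    apply max_lt (by norm_num)
    have : Real.log s / Real.log ψ < 0 := div_neg_of_neg_of_pos hlogs hlogψ
    linarith
  refine ⟨δ, hδ0, r, hr0, hr1, C, ?_⟩
  intro n hn
  have hyb := hbound n hn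
  have heq : (H n:ℝ) - δ * ψ^n = ψ^n * (y n - δ) := by
    simp only [hy]
    rw [mul_sub, mul_comm (ψ^n) ((H n:ℝ)/ψ^n), div_mul_cancel₀ _ (pow_ne_zero n hψne)]
    ring
  have hfin : (ψ*s)^n ≤ ψ^(r*(n:ℝ)) := by
    have hψs : 0 < ψ*s := mul_pos hψpos hs0
    have h1 : (ψ*s)^n = Real.exp (Real.log (ψ*s) * n) := by
      rw [← Real.rpow_natCast (ψ*s) n, Real.rpow_def_of_pos hψs]
    have h2 : ψ^(r*(n:ℝ)) = Real.exp (Real.log ψ * (r*n)) := Real.rpow_def_of_pos hψpos _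
    rw [h1, h2, Real.exp_le_exp]
    have hlm : Real.log (ψ*s) = Real.log ψ + Real.log s :=
      Real.log_mul hψne (ne_of_gt hs0)
    have hr2 : Real.log ψ + Real.log s ≤ Real.log ψ * r := by
      have h3 : 1 + Real.log s / Real.log ψ ≤ r := le_max_right _ _
      have h4 := mul_le_mul_of_nonneg_left h3 (le_of_lt hlogψ)
      rw [mul_add, mul_one, mul_div_cancel₀ _ (ne_of_gt hlogψ)] at h4
      linarith
    calc Real.log (ψ*s) * n ≤ (Real.log ψ * r) * n := by
          rw [hlm]; exact mul_le_mul_of_nonneg_right hr2 (Nat.cast_nonneg n)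
      _ = Real.log ψ * (r * n) := by ring
  calc |(H n:ℝ) - δ * ψ^n| = ψ^n * |y n - δ| := by
        rw [heq, abs_mul, abs_of_pos (pow_pos hψpos n)]
    _ ≤ ψ^n * (C * s^n) := mul_le_mul_of_nonneg_left hyb (le_of_lt (pow_pos hψpos n))
    _ = C * (ψ*s)^n := by rw [mul_pow]; ring
    _ ≤ C * ψ^(r*(n:ℝ)) := mul_le_mul_of_nonneg_left hfin hC0
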